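/- arXiv:2006.15083 — 4 statements merged into one kernel-verified Lean document; each statement's English description precedes it below -/
import Mathlib

section
/- Let α, c ∈ ℝ and λ ∈ ℂ. The following are equivalent: (i) there exist ν₁, ν₂ ∈ ℂ with Re ν₁ = Re ν₂ such that (1+iα)ν² - cν + 1 - λ = (1+iα)(ν - ν₁)(ν - ν₂) for all ν ∈ ℂ (i.e. the two roots of the dispersion relation, counted with multiplicity, have equal real parts); (ii) there exists s ≥ 0 such that λ = 1 - c²/(4(1+iα)) - (1+iα)s². -/
/-- `λ` belongs to the absolute spectrum of `L₀ = (1+iα)∂² + c∂ + 1` (both spatial roots of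
the dispersion relation have equal real parts) iff `λ = 1 - c²/(4(1+iα)) - (1+iα)s²` for
some `s ≥ 0`. -/
theorem stmt_3 (α c : ℝ) (lam : ℂ) :
    (∃ ν₁ ν₂ : ℂ, ν₁.re = ν₂.re ∧
      ∀ ν : ℂ, (1 + Complex.I * α) * ν ^ 2 - (c : ℂ) * ν + 1 - lam
        = (1 + Complex.I * α) * (ν - ν₁) * (ν - ν₂)) ↔
    (∃ s : ℝ, 0 ≤ s ∧
      lam = 1 - (c : ℂ) ^ 2 / (4 * (1 + Complex.I * α)) - (1 + Complex.I * α) * (s : ℂ) ^ 2) := by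
  have ha : (1 + Complex.I * (α : ℂ)) ≠ 0 := by
    intro h
    have := congrArg Complex.re h
    simp [Complex.add_re, Complex.mul_re] at this
  constructor
  · rintro ⟨ν₁, ν₂, hre, h⟩
    have hprod : 1 - lam = (1 + Complex.I * α) * ν₁ * ν₂ := by linear_combination h 0
    have hsum : (c : ℂ) = (1 + Complex.I * α) * (ν₁ + ν₂) := by
      linear_combination (h (-1) - h 1) / 2
    refine ⟨|ν₁.im - ν₂.im| / 2, by positivity, ?_⟩
    have hdiff : ν₁ - ν₂ = Complex.I * ((ν₁.im - ν₂.im : ℝ) : ℂ) := by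
      apply Complex.ext <;> simp [hre]
    have hD2 : ((ν₁.im - ν₂.im : ℝ) : ℂ) ^ 2 = -(ν₁ - ν₂) ^ 2 := by
      linear_combination ((ν₁.im - ν₂.im : ℝ) : ℂ) ^ 2 * Complex.I_sq
        + (ν₁ - ν₂ + Complex.I * ((ν₁.im - ν₂.im : ℝ) : ℂ)) * hdiff
    have hs : ((|ν₁.im - ν₂.im| / 2 : ℝ) : ℂ) ^ 2 = ((ν₁.im - ν₂.im : ℝ) : ℂ) ^ 2 / 4 := by
      push_cast
      rw [div_pow]
      norm_num
      norm_cast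
      rw [sq_abs]
    have hc2 : (c : ℂ) ^ 2 / (4 * (1 + Complex.I * α))
        = (1 + Complex.I * α) * (ν₁ + ν₂) ^ 2 / 4 := by
      rw [hsum]; field_simp
    rw [hs, hc2]
    linear_combination -hprod + ((1 + Complex.I * (α : ℂ)) / 4) * hD2
  · rintro ⟨s, hs, rfl⟩
    refine ⟨(c : ℂ) / (2 * (1 + Complex.I * α)) + Complex.I * s,
            (c : ℂ) / (2 * (1 + Complex.I * α)) - Complex.I * s, ?_, ?_⟩
    · simp [Complex.add_re, Complex.sub_re, Complex.mul_re]
    · intro ν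
      have hp : (1 + Complex.I * (α : ℂ)) * ((c : ℂ) / (2 * (1 + Complex.I * α)))
          = (c : ℂ) / 2 := by field_simp
      have hp2 : (1 + Complex.I * (α : ℂ)) * ((c : ℂ) / (2 * (1 + Complex.I * α))) ^ 2
          = (c : ℂ) ^ 2 / (4 * (1 + Complex.I * α)) := by
        field_simp; ring
      linear_combination (2 * ν) * hp - hp2
        + (1 + Complex.I * (α : ℂ)) * (s : ℂ) ^ 2 * Complex.I_sq
end

section
/- Let α ∈ ℝ, λ ∈ ℂ with λ ≠ 0, and let R : ℝ → ℝ be continuous with R(ξ) ≥ 0 for all ξ. Suppose ŵ, ŷ : ℝ → ℂ are twice continuously differentiable, not both identically zero, satisfy ŵ'' = λ(1-iα)ŵ + R·(2ŵ + ŷ) and ŷ'' = λ(1+iα)ŷ + R·(ŵ + 2ŷ) on ℝ, and suppose ŵ, ŷ, ŵ', ŷ', √R·ŵ, √R·ŷ are square integrable on ℝ and ŵ(ξ)·conj(ŵ'(ξ)) → 0 and ŷ(ξ)·conj(ŷ'(ξ)) → 0 as ξ → ±∞. Then Re λ < 0. -/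
open MeasureTheory Filter Complex

theorem my_ibp (f : ℝ → ℂ) (hf : ContDiff ℝ 2 f)
    (hf'2 : Integrable (fun ξ => ‖deriv f ξ‖ ^ 2))
    (hint : Integrable (fun ξ => f ξ * (starRingEnd ℂ) (deriv (deriv f) ξ)))
    (htop : Tendsto (fun ξ => f ξ * (starRingEnd ℂ) (deriv f ξ)) atTop (nhds 0))
    (hbot : Tendsto (fun ξ => f ξ * (starRingEnd ℂ) (deriv f ξ)) atBot (nhds 0)) :
    ∫ ξ, f ξ * (starRingEnd ℂ) (deriv (deriv f) ξ)
      = -((∫ ξ, ‖deriv f ξ‖ ^ 2 : ℝ) : ℂ) := by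
  have hfd : Differentiable ℝ f := hf.differentiable two_ne_zero
  have hf1 : ContDiff ℝ 1 (deriv f) := by
    have := (contDiff_succ_iff_deriv (n := 1)).mp (by exact_mod_cast hf)
    exact this.2.2
  have hfd' : Differentiable ℝ (deriv f) := hf1.differentiable one_ne_zero
  have hder : ∀ x, HasDerivAt (fun ξ => f ξ * (starRingEnd ℂ) (deriv f ξ))
      (deriv f x * (starRingEnd ℂ) (deriv f x)
        + f x * (starRingEnd ℂ) (deriv (deriv f) x)) x := by
    intro x
    have h1 : HasDerivAt f (deriv f x) x := (hfd x).hasDerivAt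
    have h2 : HasDerivAt (deriv f) (deriv (deriv f) x) x := (hfd' x).hasDerivAt
    have h3 : HasDerivAt (fun ξ => (starRingEnd ℂ) (deriv f ξ))
        ((starRingEnd ℂ) (deriv (deriv f) x)) x := by
      simpa only [starRingEnd_apply] using h2.star
    exact h1.mul h3
  have heq : (fun x => deriv f x * (starRingEnd ℂ) (deriv f x))
      = fun x => ((‖deriv f x‖ ^ 2 : ℝ) : ℂ) := by
    funext x; rw [Complex.mul_conj, Complex.normSq_eq_norm_sq]; try push_cast; try ring
  have hsq : Integrable (fun x => deriv f x * (starRingEnd ℂ) (deriv f x)) := by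
    rw [heq]; exact hf'2.ofReal
  have hi : Integrable (fun x => deriv f x * (starRingEnd ℂ) (deriv f x)
      + f x * (starRingEnd ℂ) (deriv (deriv f) x)) := hsq.add hint
  have h0 := integral_of_hasDerivAt_of_tendsto hder hi hbot htop
  rw [sub_zero, integral_add hsq hint] at h0
  have h1 : ∫ x, deriv f x * (starRingEnd ℂ) (deriv f x)
      = ((∫ ξ, ‖deriv f ξ‖ ^ 2 : ℝ) : ℂ) := by
    rw [heq]; exact integral_ofReal
  rw [h1] at h0
  linear_combination h0

/-- L² energy estimate for the coupled Sturm–Liouville system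
`ŵ'' = λ(1-iα)ŵ + R(2ŵ + ŷ)`, `ŷ'' = λ(1+iα)ŷ + R(ŵ + 2ŷ)` with `R ≥ 0`:
any nontrivial square-integrable solution (with square-integrable derivatives,
`√R ŵ, √R ŷ ∈ L²` and vanishing boundary fluxes) forces `Re λ < 0`. -/
theorem stmt_9 (α : ℝ) (lam : ℂ) (hlam : lam ≠ 0)
    (R : ℝ → ℝ) (hRcont : Continuous R) (hRpos : ∀ ξ, 0 ≤ R ξ)
    (w y : ℝ → ℂ) (hw : ContDiff ℝ 2 w) (hy : ContDiff ℝ 2 y)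
    (hnontriv : ∃ ξ, w ξ ≠ 0 ∨ y ξ ≠ 0)
    (heqw : ∀ ξ, deriv (deriv w) ξ
      = lam * (1 - Complex.I * α) * w ξ + (R ξ : ℂ) * (2 * w ξ + y ξ))
    (heqy : ∀ ξ, deriv (deriv y) ξ
      = lam * (1 + Complex.I * α) * y ξ + (R ξ : ℂ) * (w ξ + 2 * y ξ))
    (hw2 : Integrable (fun ξ => ‖w ξ‖ ^ 2))
    (hy2 : Integrable (fun ξ => ‖y ξ‖ ^ 2))
    (hw'2 : Integrable (fun ξ => ‖deriv w ξ‖ ^ 2))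
    (hy'2 : Integrable (fun ξ => ‖deriv y ξ‖ ^ 2))
    (hRw2 : Integrable (fun ξ => R ξ * ‖w ξ‖ ^ 2))
    (hRy2 : Integrable (fun ξ => R ξ * ‖y ξ‖ ^ 2))
    (hwTop : Tendsto (fun ξ => w ξ * (starRingEnd ℂ) (deriv w ξ)) atTop (nhds 0))
    (hwBot : Tendsto (fun ξ => w ξ * (starRingEnd ℂ) (deriv w ξ)) atBot (nhds 0))
    (hyTop : Tendsto (fun ξ => y ξ * (starRingEnd ℂ) (deriv y ξ)) atTop (nhds 0))
    (hyBot : Tendsto (fun ξ => y ξ * (starRingEnd ℂ) (deriv y ξ)) atBot (nhds 0)) :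
    lam.re < 0 := by
  set a := lam.re with ha
  set b := lam.im with hb
  have hwc : Continuous w := hw.continuous
  have hyc : Continuous y := hy.continuous
  -- basic pointwise norm facts
  have habs : ∀ ξ, |(w ξ * (starRingEnd ℂ) (y ξ)).re| ≤ ‖w ξ‖ * ‖y ξ‖ := by
    intro ξ
    calc |(w ξ * (starRingEnd ℂ) (y ξ)).re| ≤ ‖w ξ * (starRingEnd ℂ) (y ξ)‖ := by
          exact Complex.abs_re_le_norm _
      _ = ‖w ξ‖ * ‖y ξ‖ := by simp [norm_mul]
  -- define notation
  set c1 : ℂ := (starRingEnd ℂ) (lam * (1 - Complex.I * α)) with hc1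
  set c2 : ℂ := (starRingEnd ℂ) (lam * (1 + Complex.I * α)) with hc2
  set g : ℝ → ℝ := fun ξ =>
    R ξ * (2 * ‖w ξ‖ ^ 2 + 2 * ‖y ξ‖ ^ 2 + 2 * (w ξ * (starRingEnd ℂ) (y ξ)).re) with hg
  -- integrability of cross term
  have hRcross : Integrable (fun ξ => R ξ * (w ξ * (starRingEnd ℂ) (y ξ)).re) := by
    refine Integrable.mono' (((hRw2.add hRy2).div_const 2))
      ((hRcont.mul ((Complex.continuous_re.comp
        (hwc.mul (Complex.continuous_conj.comp hyc))))).aestronglyMeasurable) ?_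
    filter_upwards with ξ
    have h1 := habs ξ
    have h2 := hRpos ξ
    simp only [Pi.add_apply]
    rw [Real.norm_eq_abs, abs_mul, _root_.abs_of_nonneg h2]
    have h3 : R ξ * |(w ξ * (starRingEnd ℂ) (y ξ)).re| ≤ R ξ * (‖w ξ‖ * ‖y ξ‖) :=
      mul_le_mul_of_nonneg_left h1 h2
    nlinarith [sq_nonneg (‖w ξ‖ - ‖y ξ‖), mul_nonneg h2 (sq_nonneg (‖w ξ‖ - ‖y ξ‖))]
  have hgint : Integrable g := by
    have : g = fun ξ => (2 * (R ξ * ‖w ξ‖ ^ 2) + 2 * (R ξ * ‖y ξ‖ ^ 2))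
        + 2 * (R ξ * (w ξ * (starRingEnd ℂ) (y ξ)).re) := by
      funext ξ; simp only [hg]; ring
    rw [this]
    exact ((hRw2.const_mul 2).add (hRy2.const_mul 2)).add (hRcross.const_mul 2)
  -- complex integrability blocks
  have hwcc : Integrable (fun ξ => w ξ * (starRingEnd ℂ) (w ξ)) := by
    have : (fun ξ => w ξ * (starRingEnd ℂ) (w ξ)) = fun ξ => ((‖w ξ‖ ^ 2 : ℝ) : ℂ) := by
      funext ξ; rw [Complex.mul_conj, Complex.normSq_eq_norm_sq]; try push_cast; try ring
    rw [this]; exact hw2.ofReal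
  have hycc : Integrable (fun ξ => y ξ * (starRingEnd ℂ) (y ξ)) := by
    have : (fun ξ => y ξ * (starRingEnd ℂ) (y ξ)) = fun ξ => ((‖y ξ‖ ^ 2 : ℝ) : ℂ) := by
      funext ξ; rw [Complex.mul_conj, Complex.normSq_eq_norm_sq]; try push_cast; try ring
    rw [this]; exact hy2.ofReal
  have hcrossC : Integrable (fun ξ => (R ξ : ℂ) * (w ξ * (starRingEnd ℂ) (y ξ))) := by
    refine Integrable.mono' (((hRw2.add hRy2).div_const 2))
      ((Complex.continuous_ofReal.comp hRcont).mul
        (hwc.mul (Complex.continuous_conj.comp hyc))).aestronglyMeasurable ?_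
    filter_upwards with ξ
    have h2 := hRpos ξ
    simp only [Pi.add_apply]
    rw [norm_mul, Complex.norm_real, Real.norm_eq_abs, _root_.abs_of_nonneg h2, norm_mul]
    have : ‖(starRingEnd ℂ) (y ξ)‖ = ‖y ξ‖ := by simp
    rw [this]
    nlinarith [mul_nonneg h2 (sq_nonneg (‖w ξ‖ - ‖y ξ‖))]
  have hcrossC' : Integrable (fun ξ => (R ξ : ℂ) * (y ξ * (starRingEnd ℂ) (w ξ))) := by
    refine Integrable.mono' (((hRw2.add hRy2).div_const 2))
      ((Complex.continuous_ofReal.comp hRcont).mul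
        (hyc.mul (Complex.continuous_conj.comp hwc))).aestronglyMeasurable ?_
    filter_upwards with ξ
    have h2 := hRpos ξ
    simp only [Pi.add_apply]
    rw [norm_mul, Complex.norm_real, Real.norm_eq_abs, _root_.abs_of_nonneg h2, norm_mul]
    have : ‖(starRingEnd ℂ) (w ξ)‖ = ‖w ξ‖ := by simp
    rw [this]
    nlinarith [mul_nonneg h2 (sq_nonneg (‖w ξ‖ - ‖y ξ‖))]
  have hRwcC : Integrable (fun ξ => (R ξ : ℂ) * (w ξ * (starRingEnd ℂ) (w ξ))) := by
    have : (fun ξ => (R ξ : ℂ) * (w ξ * (starRingEnd ℂ) (w ξ)))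
        = fun ξ => ((R ξ * ‖w ξ‖ ^ 2 : ℝ) : ℂ) := by
      funext ξ; rw [Complex.mul_conj, Complex.normSq_eq_norm_sq]; try push_cast; try ring
    rw [this]; exact hRw2.ofReal
  have hRycC : Integrable (fun ξ => (R ξ : ℂ) * (y ξ * (starRingEnd ℂ) (y ξ))) := by
    have : (fun ξ => (R ξ : ℂ) * (y ξ * (starRingEnd ℂ) (y ξ)))
        = fun ξ => ((R ξ * ‖y ξ‖ ^ 2 : ℝ) : ℂ) := by
      funext ξ; rw [Complex.mul_conj, Complex.normSq_eq_norm_sq]; try push_cast; try ring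
    rw [this]; exact hRy2.ofReal
  -- pointwise identities for the integrands
  have hptw : ∀ ξ, w ξ * (starRingEnd ℂ) (deriv (deriv w) ξ)
      = c1 * (w ξ * (starRingEnd ℂ) (w ξ))
        + (2 * ((R ξ : ℂ) * (w ξ * (starRingEnd ℂ) (w ξ)))
          + (R ξ : ℂ) * (w ξ * (starRingEnd ℂ) (y ξ))) := by
    intro ξ
    rw [heqw ξ]
    simp only [hc1, map_add, map_mul, Complex.conj_ofReal, map_ofNat]
    ring
  have hpty : ∀ ξ, y ξ * (starRingEnd ℂ) (deriv (deriv y) ξ)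
      = c2 * (y ξ * (starRingEnd ℂ) (y ξ))
        + (2 * ((R ξ : ℂ) * (y ξ * (starRingEnd ℂ) (y ξ)))
          + (R ξ : ℂ) * (y ξ * (starRingEnd ℂ) (w ξ))) := by
    intro ξ
    rw [heqy ξ]
    simp only [hc2, map_add, map_mul, Complex.conj_ofReal, map_ofNat]
    ring
  -- integrability of w * conj w''
  have hintw : Integrable (fun ξ => w ξ * (starRingEnd ℂ) (deriv (deriv w) ξ)) := by
    have : (fun ξ => w ξ * (starRingEnd ℂ) (deriv (deriv w) ξ))
        = fun ξ => c1 * (w ξ * (starRingEnd ℂ) (w ξ))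
          + (2 * ((R ξ : ℂ) * (w ξ * (starRingEnd ℂ) (w ξ)))
            + (R ξ : ℂ) * (w ξ * (starRingEnd ℂ) (y ξ))) := funext hptw
    rw [this]
    exact (hwcc.const_mul c1).add ((hRwcC.const_mul 2).add hcrossC)
  have hinty : Integrable (fun ξ => y ξ * (starRingEnd ℂ) (deriv (deriv y) ξ)) := by
    have : (fun ξ => y ξ * (starRingEnd ℂ) (deriv (deriv y) ξ))
        = fun ξ => c2 * (y ξ * (starRingEnd ℂ) (y ξ))
          + (2 * ((R ξ : ℂ) * (y ξ * (starRingEnd ℂ) (y ξ)))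
            + (R ξ : ℂ) * (y ξ * (starRingEnd ℂ) (w ξ))) := funext hpty
    rw [this]
    exact (hycc.const_mul c2).add ((hRycC.const_mul 2).add hcrossC')
  -- integration by parts
  have hIw := my_ibp w hw hw'2 hintw hwTop hwBot
  have hIy := my_ibp y hy hy'2 hinty hyTop hyBot
  set Nw : ℝ := ∫ ξ, ‖w ξ‖ ^ 2 with hNw
  set Ny : ℝ := ∫ ξ, ‖y ξ‖ ^ 2 with hNy
  set Kw : ℝ := ∫ ξ, ‖deriv w ξ‖ ^ 2 with hKw
  set Ky : ℝ := ∫ ξ, ‖deriv y ξ‖ ^ 2 with hKy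
  set Q : ℝ := ∫ ξ, g ξ with hQdef
  -- the main complex identity
  have e1 : ∫ ξ, w ξ * (starRingEnd ℂ) (w ξ) = ((Nw : ℝ) : ℂ) := by
    have : (fun ξ => w ξ * (starRingEnd ℂ) (w ξ)) = fun ξ => ((‖w ξ‖ ^ 2 : ℝ) : ℂ) := by
      funext ξ; rw [Complex.mul_conj, Complex.normSq_eq_norm_sq]; try push_cast; try ring
    rw [this]; exact integral_ofReal
  have e2 : ∫ ξ, y ξ * (starRingEnd ℂ) (y ξ) = ((Ny : ℝ) : ℂ) := by
    have : (fun ξ => y ξ * (starRingEnd ℂ) (y ξ)) = fun ξ => ((‖y ξ‖ ^ 2 : ℝ) : ℂ) := by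
      funext ξ; rw [Complex.mul_conj, Complex.normSq_eq_norm_sq]; try push_cast; try ring
    rw [this]; exact integral_ofReal
  have hpt : ∀ ξ, w ξ * (starRingEnd ℂ) (deriv (deriv w) ξ)
        + y ξ * (starRingEnd ℂ) (deriv (deriv y) ξ)
      = (c1 * (w ξ * (starRingEnd ℂ) (w ξ)) + c2 * (y ξ * (starRingEnd ℂ) (y ξ)))
        + ((g ξ : ℝ) : ℂ) := by
    intro ξ
    have h1 : w ξ * (starRingEnd ℂ) (w ξ) = ((‖w ξ‖ ^ 2 : ℝ) : ℂ) := by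
      rw [Complex.mul_conj, Complex.normSq_eq_norm_sq]; try push_cast; try ring
    have h2 : y ξ * (starRingEnd ℂ) (y ξ) = ((‖y ξ‖ ^ 2 : ℝ) : ℂ) := by
      rw [Complex.mul_conj, Complex.normSq_eq_norm_sq]; try push_cast; try ring
    have h3 : w ξ * (starRingEnd ℂ) (y ξ) + y ξ * (starRingEnd ℂ) (w ξ)
        = ((2 * (w ξ * (starRingEnd ℂ) (y ξ)).re : ℝ) : ℂ) := by
      have h4 : y ξ * (starRingEnd ℂ) (w ξ)
          = (starRingEnd ℂ) (w ξ * (starRingEnd ℂ) (y ξ)) := by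
        rw [map_mul, Complex.conj_conj]; ring
      rw [h4, Complex.add_conj]; try push_cast; try ring
    rw [hptw ξ, hpty ξ, hg]
    push_cast at h1 h2 h3 ⊢
    linear_combination (2 * (R ξ : ℂ)) * h1 + (2 * (R ξ : ℂ)) * h2 + (R ξ : ℂ) * h3
  have hA : Integrable (fun ξ => c1 * (w ξ * (starRingEnd ℂ) (w ξ))
      + c2 * (y ξ * (starRingEnd ℂ) (y ξ))) := (hwcc.const_mul c1).add (hycc.const_mul c2)
  have hB : Integrable (fun ξ => ((g ξ : ℝ) : ℂ)) := hgint.ofReal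
  have E : c1 * (Nw : ℂ) + c2 * (Ny : ℂ) + (Q : ℂ) = -(Kw : ℂ) + -(Ky : ℂ) := by
    have s1 : ∫ ξ, (w ξ * (starRingEnd ℂ) (deriv (deriv w) ξ)
          + y ξ * (starRingEnd ℂ) (deriv (deriv y) ξ))
        = -(Kw : ℂ) + -(Ky : ℂ) := by
      rw [integral_add hintw hinty, hIw, hIy]
    have s2 : ∫ ξ, (w ξ * (starRingEnd ℂ) (deriv (deriv w) ξ)
          + y ξ * (starRingEnd ℂ) (deriv (deriv y) ξ))
        = c1 * (Nw : ℂ) + c2 * (Ny : ℂ) + (Q : ℂ) := by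
      rw [integral_congr_ae (Eventually.of_forall hpt), integral_add hA hB,
        integral_add (hwcc.const_mul c1) (hycc.const_mul c2), integral_const_mul,
        integral_const_mul, e1, e2]
      have : ∫ ξ, ((g ξ : ℝ) : ℂ) = ((Q : ℝ) : ℂ) := integral_ofReal
      rw [this]; try ring
    linear_combination s1 - s2
  -- real and imaginary parts
  have hre : (a + α * b) * Nw + (a - α * b) * Ny + Q = -Kw - Ky := by
    have h := congrArg Complex.re E
    simp only [hc1, hc2, Complex.add_re, Complex.mul_re, Complex.conj_re, Complex.conj_im,
      Complex.ofReal_re, Complex.ofReal_im, Complex.neg_re, Complex.mul_im, Complex.sub_re,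
      Complex.sub_im, Complex.one_re, Complex.one_im, Complex.I_re, Complex.I_im,
      Complex.add_im, Complex.neg_im] at h
    ring_nf at h ⊢
    linear_combination h
  have him : (a * α - b) * Nw + (-(a * α) - b) * Ny = 0 := by
    have h := congrArg Complex.im E
    simp only [hc1, hc2, Complex.add_re, Complex.mul_re, Complex.conj_re, Complex.conj_im,
      Complex.ofReal_re, Complex.ofReal_im, Complex.neg_re, Complex.mul_im, Complex.sub_re,
      Complex.sub_im, Complex.one_re, Complex.one_im, Complex.I_re, Complex.I_im,
      Complex.add_im, Complex.neg_im] at h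
    ring_nf at h ⊢
    linear_combination h
  -- positivity facts
  have hKwpos : 0 ≤ Kw := integral_nonneg fun ξ => sq_nonneg _
  have hKypos : 0 ≤ Ky := integral_nonneg fun ξ => sq_nonneg _
  have hQpos : 0 ≤ Q := by
    refine integral_nonneg fun ξ => ?_
    have h1 := habs ξ
    have h2 := hRpos ξ
    simp only [hg]
    have h3 := (abs_le.mp h1).1
    have hin : 0 ≤ 2 * ‖w ξ‖ ^ 2 + 2 * ‖y ξ‖ ^ 2 + 2 * (w ξ * (starRingEnd ℂ) (y ξ)).re := by
      nlinarith [sq_nonneg (‖w ξ‖ - ‖y ξ‖)]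
    exact mul_nonneg h2 hin
  have hNpos : 0 < Nw + Ny := by
    obtain ⟨ξ0, hξ0⟩ := hnontriv
    have hNw0 : 0 ≤ Nw := integral_nonneg fun ξ => sq_nonneg _
    have hNy0 : 0 ≤ Ny := integral_nonneg fun ξ => sq_nonneg _
    rcases hξ0 with h | h
    · have : 0 < Nw := by
        rcases lt_or_eq_of_le hNw0 with h' | h'
        · exact h'
        · exfalso
          have hz := (integral_eq_zero_iff_of_nonneg_ae
            (Eventually.of_forall fun ξ => sq_nonneg ‖w ξ‖) hw2).mp h'.symm
          have hcw : Continuous fun ξ => ‖w ξ‖ ^ 2 := (hwc.norm).pow 2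
          have := (hcw.ae_eq_iff_eq volume continuous_const).mp hz
          have := congrFun this ξ0
          have h0 : ‖w ξ0‖ ^ 2 = 0 := this
          exact h (norm_eq_zero.mp ((pow_eq_zero_iff two_ne_zero).mp h0))
      linarith
    · have : 0 < Ny := by
        rcases lt_or_eq_of_le hNy0 with h' | h'
        · exact h'
        · exfalso
          have hz := (integral_eq_zero_iff_of_nonneg_ae
            (Eventually.of_forall fun ξ => sq_nonneg ‖y ξ‖) hy2).mp h'.symm
          have hcy : Continuous fun ξ => ‖y ξ‖ ^ 2 := (hyc.norm).pow 2
          have := (hcy.ae_eq_iff_eq volume continuous_const).mp hz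
          have := congrFun this ξ0
          have h0 : ‖y ξ0‖ ^ 2 = 0 := this
          exact h (norm_eq_zero.mp ((pow_eq_zero_iff two_ne_zero).mp h0))
      linarith
  have hab : 0 < a ^ 2 + b ^ 2 := by
    have h : a ≠ 0 ∨ b ≠ 0 := by
      by_contra hc
      push_neg at hc
      exact hlam (Complex.ext_iff.mpr ⟨by simpa using hc.1, by simpa using hc.2⟩)
    rcases h with h | h
    · have := mul_self_pos.mpr h
      nlinarith [sq_nonneg b]
    · have := mul_self_pos.mpr h
      nlinarith [sq_nonneg a]
  have key : (a ^ 2 + b ^ 2) * (Nw + Ny) = -(a * (Q + Kw + Ky)) := by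
    linear_combination a * hre - b * him
  by_contra hc
  push_neg at hc
  nlinarith [mul_pos hab hNpos, mul_nonneg hc (by linarith : (0:ℝ) ≤ Q + Kw + Ky)]
end

section
/- Let n ∈ ℕ, I ⊆ ℝ an interval, and D, T₀ ∈ Mₙ(ℂ) constant matrices with D·T₀ = T₀·D. Set 𝒜 := T₀². Suppose T₁, T₂ : I → Mₙ(ℂ) are differentiable solutions of the matrix Riccati equation T' = -T² + D·T - T·D + 𝒜, such that T₁(ζ) - T₀ and T₂(ζ) - T₀ are invertible for every ζ ∈ I. Then W := (T₁ - T₀)⁻¹ - (T₂ - T₀)⁻¹ is differentiable and satisfies the linear Sylvester equation W' = (D + T₀)·W - W·(D - T₀) on I. Moreover W = (T₁ - T₀)⁻¹·(T₂ - T₁)·(T₂ - T₀)⁻¹. -/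
open Filter Topology

attribute [local instance] Matrix.linftyOpNormedRing Matrix.linftyOpNormedAlgebra
  Matrix.linftyOpNormedSpace

private theorem hasDerivAt_matrix {n : ℕ} {M : ℝ → Matrix (Fin n) (Fin n) ℂ}
    {M' : Matrix (Fin n) (Fin n) ℂ} {ζ : ℝ} :
    HasDerivAt M M' ζ ↔ ∀ i j, HasDerivAt (fun s => M s i j) (M' i j) ζ := by
  refine Iff.trans (hasDerivAt_iff_tendsto_slope (f := M)) ?_
  simp only [hasDerivAt_iff_tendsto_slope]
  change Tendsto (fun s => Matrix.of.symm (slope M ζ s)) _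
    (@nhds (Fin n → Fin n → ℂ) _ (Matrix.of.symm M')) ↔ _
  rw [tendsto_pi_nhds]
  refine forall_congr' fun i => ?_
  rw [tendsto_pi_nhds]
  refine forall_congr' fun j => ?_
  rfl

private theorem hasDerivAt_inv_matrix {n : ℕ} {M : ℝ → Matrix (Fin n) (Fin n) ℂ}
    {M' : Matrix (Fin n) (Fin n) ℂ} {ζ : ℝ} (h : HasDerivAt M M' ζ) (hu : IsUnit (M ζ)) :
    HasDerivAt (fun s => (M s)⁻¹) (-((M ζ)⁻¹ * M' * (M ζ)⁻¹)) ζ := by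
  obtain ⟨u, hu'⟩ := hu
  have h1 : HasFDerivAt Ring.inverse
      (-(ContinuousLinearMap.mulLeftRight ℝ _ (↑u⁻¹) (↑u⁻¹))) (M ζ) := by
    rw [← hu']; exact hasFDerivAt_ringInverse u
  have h2 := h1.comp_hasDerivAt ζ h
  have hc : (↑u⁻¹ : Matrix (Fin n) (Fin n) ℂ) = (M ζ)⁻¹ := by
    rw [← hu', ← Matrix.coe_units_inv]
  have hfun : (Ring.inverse ∘ M : ℝ → Matrix (Fin n) (Fin n) ℂ) = fun s => (M s)⁻¹ := by
    funext s
    simp [Function.comp, Matrix.nonsing_inv_eq_ringInverse]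
  have hval : ((-(ContinuousLinearMap.mulLeftRight ℝ (Matrix (Fin n) (Fin n) ℂ)
        (↑u⁻¹) (↑u⁻¹))) M') = -((M ζ)⁻¹ * M' * (M ζ)⁻¹) := by
    simp [ContinuousLinearMap.mulLeftRight_apply, hc, mul_assoc]
  rw [hfun, hval] at h2
  exact h2

private theorem key_alg {n : ℕ} (D T0 X : Matrix (Fin n) (Fin n) ℂ)
    (hcomm : D * T0 = T0 * D) (hu : IsUnit (X - T0)) :
    -((X - T0)⁻¹ * (-(X * X) + D * X - X * D + T0 * T0) * (X - T0)⁻¹)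
      = 1 + (D + T0) * (X - T0)⁻¹ + (X - T0)⁻¹ * (T0 - D) := by
  have hdet := (Matrix.isUnit_iff_isUnit_det _).mp hu
  have h1 : (X - T0) * (X - T0)⁻¹ = 1 := Matrix.mul_nonsing_inv _ hdet
  have h2 : (X - T0)⁻¹ * (X - T0) = 1 := Matrix.nonsing_inv_mul _ hdet
  set A := X - T0 with hA
  set B := A⁻¹
  have hX : X = A + T0 := by rw [hA]; noncomm_ring
  have e1 : -(X * X) + D * X - X * D + T0 * T0
      = -(A * A) - A * T0 - T0 * A + D * A - A * D := by
    rw [hX]; noncomm_ring; rw [hcomm]; abel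
  rw [e1]
  have expand : -(B * (-(A * A) - A * T0 - T0 * A + D * A - A * D) * B)
      = (B * A) * (A * B) + (B * A) * T0 * B + B * T0 * (A * B)
        - B * D * (A * B) + (B * A) * (D * B) := by noncomm_ring
  rw [expand, h1, h2]
  noncomm_ring

/-- Superposition principle for the matrix Riccati equation `T' = -T² + DT - TD + T₀²`
(with `D` and `T₀` commuting constant matrices, so `±T₀` are fixed points): for two
solutions `T₁, T₂` with `Tᵢ - T₀` invertible, `W = (T₁-T₀)⁻¹ - (T₂-T₀)⁻¹` solves the
linear Sylvester equation `W' = (D+T₀)W - W(D-T₀)` and equals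
`(T₁-T₀)⁻¹(T₂-T₁)(T₂-T₀)⁻¹`. -/
theorem stmt_12 (n : ℕ) (I : Set ℝ) (hI : I.OrdConnected)
    (D T0 : Matrix (Fin n) (Fin n) ℂ) (hcomm : D * T0 = T0 * D)
    (T1 T2 : ℝ → Matrix (Fin n) (Fin n) ℂ)
    (hT1 : ∀ ζ ∈ I, ∀ i j, HasDerivAt (fun s => T1 s i j)
      ((-(T1 ζ * T1 ζ) + D * T1 ζ - T1 ζ * D + T0 * T0) i j) ζ)
    (hT2 : ∀ ζ ∈ I, ∀ i j, HasDerivAt (fun s => T2 s i j)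
      ((-(T2 ζ * T2 ζ) + D * T2 ζ - T2 ζ * D + T0 * T0) i j) ζ)
    (hinv1 : ∀ ζ ∈ I, IsUnit (T1 ζ - T0))
    (hinv2 : ∀ ζ ∈ I, IsUnit (T2 ζ - T0)) :
    (∀ ζ ∈ I, ∀ i j, HasDerivAt (fun s => ((T1 s - T0)⁻¹ - (T2 s - T0)⁻¹) i j)
      (((D + T0) * ((T1 ζ - T0)⁻¹ - (T2 ζ - T0)⁻¹)
        - ((T1 ζ - T0)⁻¹ - (T2 ζ - T0)⁻¹) * (D - T0)) i j) ζ) ∧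
    (∀ ζ ∈ I, (T1 ζ - T0)⁻¹ - (T2 ζ - T0)⁻¹
      = (T1 ζ - T0)⁻¹ * (T2 ζ - T1 ζ) * (T2 ζ - T0)⁻¹) := by
  constructor
  · intro ζ hζ
    have hA : HasDerivAt (fun s => T1 s - T0)
        (-(T1 ζ * T1 ζ) + D * T1 ζ - T1 ζ * D + T0 * T0) ζ :=
      hasDerivAt_matrix.2 fun i j => by
        simpa [Matrix.sub_apply] using (hT1 ζ hζ i j).sub_const (T0 i j)
    have hB : HasDerivAt (fun s => T2 s - T0)
        (-(T2 ζ * T2 ζ) + D * T2 ζ - T2 ζ * D + T0 * T0) ζ :=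
      hasDerivAt_matrix.2 fun i j => by
        simpa [Matrix.sub_apply] using (hT2 ζ hζ i j).sub_const (T0 i j)
    have hAinv := hasDerivAt_inv_matrix hA (hinv1 ζ hζ)
    have hBinv := hasDerivAt_inv_matrix hB (hinv2 ζ hζ)
    have hW := hAinv.sub hBinv
    have keyeq : -((T1 ζ - T0)⁻¹ * (-(T1 ζ * T1 ζ) + D * T1 ζ - T1 ζ * D + T0 * T0)
          * (T1 ζ - T0)⁻¹)
        - -((T2 ζ - T0)⁻¹ * (-(T2 ζ * T2 ζ) + D * T2 ζ - T2 ζ * D + T0 * T0)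
          * (T2 ζ - T0)⁻¹)
        = (D + T0) * ((T1 ζ - T0)⁻¹ - (T2 ζ - T0)⁻¹)
          - ((T1 ζ - T0)⁻¹ - (T2 ζ - T0)⁻¹) * (D - T0) := by
      rw [key_alg D T0 (T1 ζ) hcomm (hinv1 ζ hζ), key_alg D T0 (T2 ζ) hcomm (hinv2 ζ hζ)]
      noncomm_ring
    rw [keyeq] at hW
    exact hasDerivAt_matrix.1 hW
  · intro ζ hζ
    have h1 : (T2 ζ - T0) * (T2 ζ - T0)⁻¹ = 1 :=
      Matrix.mul_nonsing_inv _ ((Matrix.isUnit_iff_isUnit_det _).mp (hinv2 ζ hζ))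
    have h2 : (T1 ζ - T0)⁻¹ * (T1 ζ - T0) = 1 :=
      Matrix.nonsing_inv_mul _ ((Matrix.isUnit_iff_isUnit_det _).mp (hinv1 ζ hζ))
    have e : T2 ζ - T1 ζ = (T2 ζ - T0) - (T1 ζ - T0) := by noncomm_ring
    rw [e]
    calc (T1 ζ - T0)⁻¹ - (T2 ζ - T0)⁻¹
        = (T1 ζ - T0)⁻¹ * ((T2 ζ - T0) * (T2 ζ - T0)⁻¹)
          - ((T1 ζ - T0)⁻¹ * (T1 ζ - T0)) * (T2 ζ - T0)⁻¹ := by rw [h1, h2]; noncomm_ring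
      _ = (T1 ζ - T0)⁻¹ * ((T2 ζ - T0) - (T1 ζ - T0)) * (T2 ζ - T0)⁻¹ := by noncomm_ring
end

section
/- Let α, ρ, l ∈ ℝ with α² < 1/2. If (-l² + 2il - 1 - iρ(1-iα))·(-l² + 2il - 1 - iρ(1+iα)) = 1, then l = 0 and ρ = 0. -/
/-- Spectral stability of the wave train for `α² < 1/2`: if the dispersion relation
`(-l² + 2il - 1 - iρ(1-iα))(-l² + 2il - 1 - iρ(1+iα)) = 1` holds with `l, ρ` real,
then `l = 0` and `ρ = 0`, i.e. the essential spectrum touches the imaginary axis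
only at the origin. -/
theorem stmt_17 (α ρ l : ℝ) (hα : α ^ 2 < 1 / 2)
    (h : (-(l : ℂ) ^ 2 + 2 * Complex.I * l - 1 - Complex.I * ρ * (1 - Complex.I * α))
        * (-(l : ℂ) ^ 2 + 2 * Complex.I * l - 1 - Complex.I * ρ * (1 + Complex.I * α))
        = 1) :
    l = 0 ∧ ρ = 0 := by
  have hre := congrArg Complex.re h
  have him := congrArg Complex.im h
  simp [Complex.ext_iff, pow_two, Complex.mul_re, Complex.mul_im] at hre him
  ring_nf at hre him
  have h1 : ρ = 2 * l := by nlinarith [sq_nonneg l, sq_nonneg (l^2+1)]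
  subst h1
  have h2 : l ^ 2 * (l ^ 2 + 2 - 4 * α ^ 2) = 0 := by linear_combination hre
  have hpos : l ^ 2 + 2 - 4 * α ^ 2 > 0 := by nlinarith [sq_nonneg l]
  have hl2 : l ^ 2 = 0 := (mul_eq_zero.1 h2).resolve_right (ne_of_gt hpos)
  have hl : l = 0 := by nlinarith [hl2]
  exact ⟨hl, by rw [hl]; ring⟩
end
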